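/- Let μ be a compactly supported probability measure on ℝ that is not a point mass, and let t > 0. Define Λₜ = {a₀ + i b₀ ∈ ℂ : ∫ dμ(x)/((a₀-x)² + b₀²) > 1/t}. If z₁, z₂ lie in the complement of Λₜ (i.e., ∫ dμ(x)/|zⱼ - x|² ≤ 1/t for j = 1,2) and z₁ ≠ z₂, then ∫ dμ(x)/((z₁-x)(z₂-x)) ≠ -1/t. -/

import Mathlib

open MeasureTheory
open scoped ENNReal

private lemma norm_sub_real_sq (z : ℂ) (x : ℝ) :
    ‖z - (x:ℂ)‖^2 = (z.re - x)^2 + z.im^2 := by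
  rw [Complex.sq_norm, Complex.normSq_apply]
  simp [Complex.sub_re, Complex.sub_im]
  ring

private lemma eq_dirac_aux (μ : Measure ℝ) [IsProbabilityMeasure μ] (x₀ : ℝ)
    (h : μ ({x₀}ᶜ) = 0) : μ = Measure.dirac x₀ := by
  ext s hs
  rw [Measure.dirac_apply' _ hs]
  by_cases hx : x₀ ∈ s
  · have hsc : μ sᶜ = 0 := measure_mono_null (fun y hy => fun (he : y = x₀) => hy (he ▸ hx)) h
    have : μ s = 1 := by
      have := measure_add_measure_compl (μ := μ) hs
      simp [hsc] at this
      simpa using this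
    simp [Set.indicator_of_mem hx, this]
  · have : μ s = 0 := measure_mono_null (fun y hy (he : y = x₀) => hx (he ▸ hy)) h
    simp [Set.indicator_of_notMem hx, this]

/-- AM-GM for inverses. -/
private lemma invamgm {a b : ℝ} (ha : 0 ≤ a) (hb : 0 ≤ b) :
    a⁻¹ * b⁻¹ ≤ (1 / a ^ 2 + 1 / b ^ 2) / 2 := by
  rcases eq_or_lt_of_le ha with h | h
  · simp [← h]; positivity
  rcases eq_or_lt_of_le hb with h' | h'
  · simp [← h']; positivity
  rw [one_div, one_div, ← inv_pow, ← inv_pow]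
  nlinarith [sq_nonneg (a⁻¹ - b⁻¹)]

/-- equality case of AM-GM. -/
private lemma invamgm_eq {a b : ℝ} (ha : 0 ≤ a) (hb : 0 ≤ b)
    (h : a⁻¹ * b⁻¹ = (1 / a ^ 2 + 1 / b ^ 2) / 2) : a = b := by
  rcases eq_or_lt_of_le ha with h0 | h0
  · rw [← h0] at h ⊢
    simp only [inv_zero, zero_mul, one_div] at h
    have : (b ^ 2)⁻¹ = 0 := by
      simp at h
      nlinarith [inv_nonneg.mpr (sq_nonneg b)]
    have : b ^ 2 = 0 := inv_eq_zero.mp this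
    exact (pow_eq_zero_iff (by norm_num)).mp this |>.symm
  rcases eq_or_lt_of_le hb with h0' | h0'
  · rw [← h0'] at h ⊢
    simp only [inv_zero, mul_zero, one_div] at h
    have : (a ^ 2)⁻¹ = 0 := by
      nlinarith [inv_nonneg.mpr (sq_nonneg a)]
    have : a ^ 2 = 0 := inv_eq_zero.mp this
    exact (pow_eq_zero_iff (by norm_num)).mp this
  rw [one_div, one_div, ← inv_pow, ← inv_pow] at h
  have hu : a⁻¹ = b⁻¹ := by nlinarith [sq_nonneg (a⁻¹ - b⁻¹)]
  exact inv_injective hu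

/-- If `μ` is a compactly supported probability measure on `ℝ` that is not a
point mass, `t > 0`, and `z₁ ≠ z₂` both satisfy `∫ dμ(x)/|z-x|² ≤ 1/t`, then
`∫ dμ(x)/((z₁-x)(z₂-x)) ≠ -1/t`. -/
theorem stmt_1 (μ : Measure ℝ) [IsProbabilityMeasure μ]
    (K : Set ℝ) (hK : IsCompact K) (hμK : μ Kᶜ = 0)
    (hnd : ∀ c : ℝ, μ ≠ Measure.dirac c)
    (t : ℝ) (ht : 0 < t) (z₁ z₂ : ℂ) (hz : z₁ ≠ z₂)
    (h₁ : ∫⁻ x, ENNReal.ofReal (1 / ‖z₁ - (x : ℂ)‖ ^ 2) ∂μ ≤ ENNReal.ofReal (1 / t))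
    (h₂ : ∫⁻ x, ENNReal.ofReal (1 / ‖z₂ - (x : ℂ)‖ ^ 2) ∂μ ≤ ENNReal.ofReal (1 / t)) :
    ∫ x, ((z₁ - (x : ℂ)) * (z₂ - (x : ℂ)))⁻¹ ∂μ ≠ -(1 / (t : ℂ)) := by
  intro hcon
  set F₁ : ℝ → ℝ := fun x => 1 / ‖z₁ - (x : ℂ)‖ ^ 2 with hF₁def
  set F₂ : ℝ → ℝ := fun x => 1 / ‖z₂ - (x : ℂ)‖ ^ 2 with hF₂def
  set f : ℝ → ℂ := fun x => ((z₁ - (x : ℂ)) * (z₂ - (x : ℂ)))⁻¹ with hfdef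
  have hF₁nn : ∀ x, 0 ≤ F₁ x := fun x => by positivity
  have hF₂nn : ∀ x, 0 ≤ F₂ x := fun x => by positivity
  -- measurability
  have hc1 : Continuous fun x : ℝ => ‖z₁ - (x : ℂ)‖ ^ 2 := by continuity
  have hc2 : Continuous fun x : ℝ => ‖z₂ - (x : ℂ)‖ ^ 2 := by continuity
  have hm1 : Measurable F₁ := by
    exact measurable_const.div hc1.measurable
  have hm2 : Measurable F₂ := by
    exact measurable_const.div hc2.measurable
  have hmf : Measurable f := by
    have : Continuous fun x : ℝ => (z₁ - (x : ℂ)) * (z₂ - (x : ℂ)) := by continuity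
    exact this.measurable.inv
  -- integrability of F₁, F₂
  have hint1 : Integrable F₁ μ :=
    ⟨hm1.aestronglyMeasurable, by
      rw [hasFiniteIntegral_iff_ofReal (Filter.Eventually.of_forall hF₁nn)]
      exact lt_of_le_of_lt h₁ ENNReal.ofReal_lt_top⟩
  have hint2 : Integrable F₂ μ :=
    ⟨hm2.aestronglyMeasurable, by
      rw [hasFiniteIntegral_iff_ofReal (Filter.Eventually.of_forall hF₂nn)]
      exact lt_of_le_of_lt h₂ ENNReal.ofReal_lt_top⟩
  -- integral bounds
  have hI1 : ∫ x, F₁ x ∂μ ≤ 1 / t := by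
    rw [integral_eq_lintegral_of_nonneg_ae (Filter.Eventually.of_forall hF₁nn)
      hm1.aestronglyMeasurable]
    calc (∫⁻ x, ENNReal.ofReal (F₁ x) ∂μ).toReal
        ≤ (ENNReal.ofReal (1 / t)).toReal := ENNReal.toReal_mono ENNReal.ofReal_ne_top h₁
      _ = 1 / t := ENNReal.toReal_ofReal (by positivity)
  have hI2 : ∫ x, F₂ x ∂μ ≤ 1 / t := by
    rw [integral_eq_lintegral_of_nonneg_ae (Filter.Eventually.of_forall hF₂nn)
      hm2.aestronglyMeasurable]
    calc (∫⁻ x, ENNReal.ofReal (F₂ x) ∂μ).toReal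
        ≤ (ENNReal.ofReal (1 / t)).toReal := ENNReal.toReal_mono ENNReal.ofReal_ne_top h₂
      _ = 1 / t := ENNReal.toReal_ofReal (by positivity)
  -- pointwise bound
  have hnormf : ∀ x : ℝ, ‖f x‖ = ‖z₁ - (x:ℂ)‖⁻¹ * ‖z₂ - (x:ℂ)‖⁻¹ := by
    intro x
    rw [hfdef]
    simp [norm_inv, norm_mul, mul_inv, mul_comm]
  have hb : ∀ x, ‖f x‖ ≤ (F₁ x + F₂ x) / 2 := by
    intro x
    rw [hnormf x]
    exact invamgm (norm_nonneg _) (norm_nonneg _)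
  -- integrability of f
  have hintf : Integrable f μ := by
    refine Integrable.mono' (((hint1.add hint2).div_const 2)) hmf.aestronglyMeasurable
      (Filter.Eventually.of_forall ?_)
    intro x
    simpa using hb x
  -- real part of the integral
  have hre : ∫ x, (f x).re ∂μ = -(1 / t) := by
    have h := integral_re (𝕜 := ℂ) hintf
    rw [hcon] at h
    simp only [RCLike.re_to_complex] at h
    rw [h]
    have : -(1 / (t:ℂ)) = ((-(1/t) : ℝ) : ℂ) := by push_cast; ring
    rw [this, Complex.ofReal_re]
  -- define g and show it is a.e. zero
  set g : ℝ → ℝ := fun x => (f x).re + (F₁ x + F₂ x) / 2 with hgdef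
  have hgnn : ∀ x, 0 ≤ g x := by
    intro x
    have h1 : -‖f x‖ ≤ (f x).re := by
      have := Complex.abs_re_le_norm (f x)
      have := neg_abs_le (f x).re
      linarith
    have h2 : ‖f x‖ = ‖f x‖ := rfl
    have := hb x
    rw [h2] at this
    simp only [hgdef]
    linarith
  have hr : Integrable (fun x => (f x).re) μ := by
    have := hintf.re
    simpa [RCLike.re_to_complex] using this
  have hhalf : Integrable (fun x => (F₁ x + F₂ x) / 2) μ := by
    have := (hint1.add hint2).div_const 2
    simpa using this
  have hgint : Integrable g μ := hr.add hhalf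
  have hgzero : ∫ x, g x ∂μ = 0 := by
    have hle : ∫ x, g x ∂μ ≤ 0 := by
      have hsplit : ∫ x, g x ∂μ = (∫ x, (f x).re ∂μ) + ∫ x, (F₁ x + F₂ x) / 2 ∂μ :=
        integral_add hr hhalf
      have hsplit2 : ∫ x, (F₁ x + F₂ x) / 2 ∂μ = ((∫ x, F₁ x ∂μ) + ∫ x, F₂ x ∂μ) / 2 := by
        rw [integral_div, integral_add hint1 hint2]
      rw [hsplit, hsplit2, hre]
      linarith
    have hge : 0 ≤ ∫ x, g x ∂μ := integral_nonneg hgnn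
    linarith
  have hgae : ∀ᵐ x ∂μ, g x = 0 := by
    have := (integral_eq_zero_iff_of_nonneg hgnn hgint).mp hgzero
    filter_upwards [this] with x hx
    simpa using hx
  -- nonempty ae filter
  have hne : (ae μ).NeBot := ae_neBot.mpr (IsProbabilityMeasure.ne_zero μ)
  by_cases hconj : z₂ = (starRingEnd ℂ) z₁
  · -- case z₂ = conj z₁: g is everywhere positive, contradiction
    have hpos : ∀ x : ℝ, 0 < g x := by
      intro x
      have hzx : z₁ - (x:ℂ) ≠ 0 := by
        intro h0
        apply hz
        have : z₁ = (x:ℂ) := by linear_combination h0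
        rw [hconj, this, Complex.conj_ofReal]
      have hfx : f x = ((Complex.normSq (z₁ - (x:ℂ)) : ℝ) : ℂ)⁻¹ := by
        rw [hfdef]
        simp only
        rw [hconj]
        have : (starRingEnd ℂ) z₁ - (x:ℂ) = (starRingEnd ℂ) (z₁ - (x:ℂ)) := by
          rw [map_sub, Complex.conj_ofReal]
        rw [this, Complex.mul_conj]
      have hnsq : 0 < Complex.normSq (z₁ - (x:ℂ)) := Complex.normSq_pos.mpr hzx
      have hrefx : (f x).re = (Complex.normSq (z₁ - (x:ℂ)))⁻¹ := by
        rw [hfx, ← Complex.ofReal_inv, Complex.ofReal_re]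
      have : 0 < (f x).re := by rw [hrefx]; positivity
      have := hF₁nn x
      have := hF₂nn x
      simp only [hgdef]
      linarith [hF₁nn x, hF₂nn x]
    obtain ⟨x, hx⟩ := hgae.exists
    exact absurd hx (ne_of_gt (hpos x))
  · -- case z₂ ≠ conj z₁: equality forces ‖z₁-x‖ = ‖z₂-x‖ a.e.
    have haeS : ∀ᵐ (x : ℝ) ∂μ, ‖z₁ - (x:ℂ)‖ = ‖z₂ - (x:ℂ)‖ := by
      filter_upwards [hgae] with x hx
      have h1 : -‖f x‖ ≤ (f x).re := by
        have := Complex.abs_re_le_norm (f x)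
        have := neg_abs_le (f x).re
        linarith
      have h2 : ‖f x‖ = ‖f x‖ := rfl
      have hb' := hb x
      rw [h2] at hb'
      have hgeq : (f x).re = -((F₁ x + F₂ x) / 2) := by
        simp only [hgdef] at hx; linarith
      have heq : ‖f x‖ = (F₁ x + F₂ x) / 2 := by
        rw [h2]; linarith
      rw [hnormf x] at heq
      exact invamgm_eq (norm_nonneg _) (norm_nonneg _) heq
    obtain ⟨x₀, hx₀⟩ := haeS.exists
    -- uniqueness: any solution equals x₀
    have huniq : ∀ y : ℝ, ‖z₁ - (y:ℂ)‖ = ‖z₂ - (y:ℂ)‖ → y = x₀ := by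
      intro y hy
      have e1 : (z₁.re - x₀)^2 + z₁.im^2 = (z₂.re - x₀)^2 + z₂.im^2 := by
        have h := congrArg (· ^ 2) hx₀
        rw [norm_sub_real_sq, norm_sub_real_sq] at h
        exact h
      have e2 : (z₁.re - y)^2 + z₁.im^2 = (z₂.re - y)^2 + z₂.im^2 := by
        have h := congrArg (· ^ 2) hy
        rw [norm_sub_real_sq, norm_sub_real_sq] at h
        exact h
      by_cases hrc : z₁.re = z₂.re
      · exfalso
        have him2 : z₁.im^2 = z₂.im^2 := by
          rw [hrc] at e1; linarith
        rcases sq_eq_sq_iff_eq_or_eq_neg.mp him2 with h | h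
        · exact hz (Complex.ext hrc h)
        · exact hconj (Complex.ext hrc.symm (by simp [Complex.conj_im, h]))
      · have key : (y - x₀) * (z₁.re - z₂.re) = 0 := by linear_combination (e1 - e2) / 2
        rcases mul_eq_zero.mp key with h | h
        · linarith [sub_eq_zero.mp h]
        · exact absurd (sub_eq_zero.mp h) hrc
    -- a.e. every point equals x₀ ⇒ μ = dirac x₀
    have hae' : ∀ᵐ (x : ℝ) ∂μ, x = x₀ := by
      filter_upwards [haeS] with x hx
      exact huniq x hx
    have hcompl : μ ({x₀}ᶜ) = 0 := by
      have := hae'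
      rw [Filter.Eventually, mem_ae_iff] at this
      have he : {x : ℝ | x = x₀}ᶜ = ({x₀}ᶜ : Set ℝ) := by ext x; simp
      rwa [he] at this
    exact hnd x₀ (eq_dirac_aux μ x₀ hcompl)
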